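/- Let k be a field, V and W 3-dimensional vector spaces, and let v₁, v₂ ∈ V be linearly independent and w₁, w₂ ∈ W be linearly independent. Then the intersection of the subspaces (v₁ ⊗ W + V ⊗ w₁) and (v₂ ⊗ W + V ⊗ w₂) of V ⊗ W equals the 2-dimensional span of v₁ ⊗ w₂ and v₂ ⊗ w₁. -/

import Mathlib

open TensorProduct

/-- Let `k` be a field, `V` and `W` 3-dimensional vector spaces, and let
`v₁, v₂ ∈ V` be linearly independent and `w₁, w₂ ∈ W` be linearly independent.  Then the
intersection of the subspaces `v₁ ⊗ W + V ⊗ w₁` and `v₂ ⊗ W + V ⊗ w₂` of `V ⊗ W` equals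
the 2-dimensional span of `v₁ ⊗ w₂` and `v₂ ⊗ w₁`. -/
theorem stmt2 (k : Type*) [Field k]
    (V W : Type*) [AddCommGroup V] [Module k V] [AddCommGroup W] [Module k W]
    [FiniteDimensional k V] [FiniteDimensional k W]
    (hV : Module.finrank k V = 3) (hW : Module.finrank k W = 3)
    (v₁ v₂ : V) (w₁ w₂ : W)
    (hv : LinearIndependent k ![v₁, v₂]) (hw : LinearIndependent k ![w₁, w₂]) :
    ((LinearMap.range (TensorProduct.mk k V W v₁) ⊔
        LinearMap.range ((TensorProduct.mk k V W).flip w₁)) ⊓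
      (LinearMap.range (TensorProduct.mk k V W v₂) ⊔
        LinearMap.range ((TensorProduct.mk k V W).flip w₂))
      = Submodule.span k {v₁ ⊗ₜ[k] w₂, v₂ ⊗ₜ[k] w₁}) ∧
    Module.finrank k (Submodule.span k {v₁ ⊗ₜ[k] w₂, v₂ ⊗ₜ[k] w₁} : Submodule k (V ⊗[k] W))
      = 2 := by
  classical
  -- extend v₁, v₂ to a basis
  obtain ⟨v₀, hv₀⟩ : ∃ x : V, x ∉ Submodule.span k (Set.range ![v₁, v₂]) := by
    by_contra h
    push_neg at h
    have htop : Submodule.span k (Set.range ![v₁, v₂]) = ⊤ := by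
      rw [Submodule.eq_top_iff']; exact h
    have := finrank_span_eq_card hv
    rw [htop] at this
    simp [hV] at this
  obtain ⟨w₀, hw₀⟩ : ∃ x : W, x ∉ Submodule.span k (Set.range ![w₁, w₂]) := by
    by_contra h
    push_neg at h
    have htop : Submodule.span k (Set.range ![w₁, w₂]) = ⊤ := by
      rw [Submodule.eq_top_iff']; exact h
    have := finrank_span_eq_card hw
    rw [htop] at this
    simp [hW] at this
  have hVind : LinearIndependent k ![v₀, v₁, v₂] := hv.fin_cons hv₀
  have hWind : LinearIndependent k ![w₀, w₁, w₂] := hw.fin_cons hw₀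
  let bV : Module.Basis (Fin 3) k V := basisOfLinearIndependentOfCardEqFinrank hVind (by simp [hV])
  let bW : Module.Basis (Fin 3) k W := basisOfLinearIndependentOfCardEqFinrank hWind (by simp [hW])
  have hbV : ∀ i, bV i = ![v₀, v₁, v₂] i := fun i => by
    simp [bV, coe_basisOfLinearIndependentOfCardEqFinrank]
  have hbW : ∀ i, bW i = ![w₀, w₁, w₂] i := fun i => by
    simp [bW, coe_basisOfLinearIndependentOfCardEqFinrank]
  set B : Module.Basis (Fin 3 × Fin 3) k (V ⊗[k] W) := bV.tensorProduct bW with hB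
  have hBapp : ∀ p : Fin 3 × Fin 3, B p = bV p.1 ⊗ₜ[k] bW p.2 := fun p =>
    Module.Basis.tensorProduct_apply' bV bW p
  -- ranges as spans
  have hr1 : ∀ v : V, LinearMap.range (TensorProduct.mk k V W v)
      = Submodule.span k (Set.range fun j => v ⊗ₜ[k] bW j) := by
    intro v
    rw [← Submodule.map_top, ← bW.span_eq, Submodule.map_span, ← Set.range_comp]
    rfl
  have hr2 : ∀ w : W, LinearMap.range ((TensorProduct.mk k V W).flip w)
      = Submodule.span k (Set.range fun i => bV i ⊗ₜ[k] w) := by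
    intro w
    rw [← Submodule.map_top, ← bV.span_eq, Submodule.map_span, ← Set.range_comp]
    rfl
  -- the two big subspaces as spans of basis vectors
  have key : ∀ (a : Fin 3) (v : V) (w : W), bV a = v → bW a = w →
      LinearMap.range (TensorProduct.mk k V W v) ⊔ LinearMap.range ((TensorProduct.mk k V W).flip w)
      = Submodule.span k (B '' {p : Fin 3 × Fin 3 | p.1 = a ∨ p.2 = a}) := by
    intro a v w hv' hw'
    rw [hr1, hr2, ← Submodule.span_union]
    congr 1
    ext x
    simp only [Set.mem_union, Set.mem_range, Set.mem_image, Set.mem_setOf_eq, hBapp]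
    constructor
    · rintro (⟨j, rfl⟩ | ⟨i, rfl⟩)
      · exact ⟨(a, j), Or.inl rfl, by simp [hv']⟩
      · exact ⟨(i, a), Or.inr rfl, by simp [hw']⟩
    · rintro ⟨⟨i, j⟩, (h | h), rfl⟩
      · subst h; exact Or.inl ⟨j, by simp [hv']⟩
      · subst h; exact Or.inr ⟨i, by simp [hw']⟩
  -- intersection of spans of basis vectors
  have hinter : ∀ s t : Set (Fin 3 × Fin 3),
      Submodule.span k (B '' s) ⊓ Submodule.span k (B '' t)
        = Submodule.span k (B '' (s ∩ t)) := by
    intro s t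
    ext x
    simp only [Submodule.mem_inf, Module.Basis.mem_span_image, Set.subset_inter_iff]
  have hset : ({p : Fin 3 × Fin 3 | p.1 = 1 ∨ p.2 = 1} ∩ {p : Fin 3 × Fin 3 | p.1 = 2 ∨ p.2 = 2})
      = {((1 : Fin 3), (2 : Fin 3)), ((2 : Fin 3), (1 : Fin 3))} := by
    ext p; revert p; decide
  have himg : B '' {((1 : Fin 3), (2 : Fin 3)), ((2 : Fin 3), (1 : Fin 3))}
      = {v₁ ⊗ₜ[k] w₂, v₂ ⊗ₜ[k] w₁} := by
    rw [Set.image_pair]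
    simp [hBapp, hbV, hbW]
  have hmain : (LinearMap.range (TensorProduct.mk k V W v₁) ⊔
        LinearMap.range ((TensorProduct.mk k V W).flip w₁)) ⊓
      (LinearMap.range (TensorProduct.mk k V W v₂) ⊔
        LinearMap.range ((TensorProduct.mk k V W).flip w₂))
      = Submodule.span k {v₁ ⊗ₜ[k] w₂, v₂ ⊗ₜ[k] w₁} := by
    rw [key 1 v₁ w₁ (by simp [hbV]) (by simp [hbW]),
        key 2 v₂ w₂ (by simp [hbV]) (by simp [hbW]), hinter, hset, himg]
  refine ⟨hmain, ?_⟩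
  -- finrank computation
  have hli : LinearIndependent k ![v₁ ⊗ₜ[k] w₂, v₂ ⊗ₜ[k] w₁] := by
    have hf : Function.Injective ![((1 : Fin 3), (2 : Fin 3)), ((2 : Fin 3), (1 : Fin 3))] := by
      decide
    have := B.linearIndependent.comp _ hf
    convert this using 1
    funext i
    fin_cases i <;> simp [hBapp, hbV, hbW]
  have hrange : Set.range ![v₁ ⊗ₜ[k] w₂, v₂ ⊗ₜ[k] w₁] = {v₁ ⊗ₜ[k] w₂, v₂ ⊗ₜ[k] w₁} := by
    ext x
    simp [Fin.exists_fin_two, or_comm]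
  rw [← hrange, finrank_span_eq_card hli]
  simp
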